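/- Under the hypotheses of the Floquet decomposition (A T-diagonal-periodic with invertible values, Φ(t) = P(t)B(t)^{μ(t)}, B(t+1)=B(t), P(t) invertible), if y : ℕ^m → ℂ^n satisfies y(t+1) = B(t)y(t) for all t ∈ ℕ^m, then x(t) := P(t)y(t) satisfies x(t+1) = A(t)x(t) for all t ∈ ℕ^m. Conversely, if x satisfies x(t+1)=A(t)x(t), then y(t) := P(t)^{-1}x(t) satisfies y(t+1) = B(t)y(t). -/

import Mathlib

/-- Floquet reduction: via `x(t) = P(t)y(t)`, solutions of `y(t+1) = B(t)y(t)` correspond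
to solutions of `x(t+1) = A(t)x(t)`, and conversely via `y(t) = P(t)⁻¹x(t)`. -/
theorem stmt_4 {m n T : ℕ} (hm : 2 ≤ m) (hT : 1 ≤ T)
    (A : (Fin m → ℕ) → Matrix (Fin n) (Fin n) ℝ)
    (hA : ∀ t : Fin m → ℕ, A (fun i => t i + T) = A t)
    (hAinv : ∀ t : Fin m → ℕ, IsUnit (A t))
    (Φ : (Fin m → ℕ) → Matrix (Fin n) (Fin n) ℝ)
    (hΦ : ∀ t : Fin m → ℕ,
      Φ t = ((List.range (⨅ i, t i)).map
        (fun k => A (fun i => t i - (k + 1)))).prod)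
    (B : (Fin m → ℕ) → Matrix (Fin n) (Fin n) ℂ)
    (hBper : ∀ t : Fin m → ℕ, B (fun i => t i + 1) = B t)
    (hBroot : ∀ t : Fin m → ℕ,
      (B t) ^ T = ((List.range T).map
        (fun k => A (fun i => (t i - ⨅ i, t i) + (T - 1 - k)))).prod.map
          (Complex.ofReal))
    (hBinv : ∀ t : Fin m → ℕ, IsUnit (B t))
    (P : (Fin m → ℕ) → Matrix (Fin n) (Fin n) ℂ)
    (hP : ∀ t : Fin m → ℕ,
      P t = (Φ t).map (Complex.ofReal) * ((B t)⁻¹) ^ (⨅ i, t i))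
    (hPinv : ∀ t : Fin m → ℕ, IsUnit (P t)) :
    (∀ y : (Fin m → ℕ) → (Fin n → ℂ),
      (∀ t : Fin m → ℕ, y (fun i => t i + 1) = (B t).mulVec (y t)) →
      (∀ t : Fin m → ℕ,
        (P (fun i => t i + 1)).mulVec (y (fun i => t i + 1)) =
          ((A t).map (Complex.ofReal)).mulVec ((P t).mulVec (y t)))) ∧
    (∀ x : (Fin m → ℕ) → (Fin n → ℂ),
      (∀ t : Fin m → ℕ,
        x (fun i => t i + 1) = ((A t).map (Complex.ofReal)).mulVec (x t)) →
      (∀ t : Fin m → ℕ,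
        (P (fun i => t i + 1))⁻¹.mulVec (x (fun i => t i + 1)) =
          (B t).mulVec ((P t)⁻¹.mulVec (x t)))) := by
  have hm0 : 0 < m := by omega
  have : NeZero m := ⟨by omega⟩
  have hinf : ∀ t : Fin m → ℕ, (⨅ i, (t i + 1)) = (⨅ i, t i) + 1 := by
    intro t
    obtain ⟨i0, hi0⟩ := Finite.exists_min t
    have h1 : (⨅ i, t i) = t i0 := le_antisymm (ciInf_le' _ i0) (le_ciInf hi0)
    have h2 : (⨅ i, (t i + 1)) = t i0 + 1 :=
      le_antisymm (ciInf_le' _ i0) (le_ciInf fun i => by simpa using hi0 i)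
    omega
  have hinfle : ∀ (t : Fin m → ℕ) (i : Fin m), (⨅ j, t j) ≤ t i :=
    fun t i => ciInf_le' _ i
  have hΦstep : ∀ t : Fin m → ℕ, Φ (fun i => t i + 1) = A t * Φ t := by
    intro t
    rw [hΦ, hΦ, hinf t, List.range_succ_eq_map]
    simp only [List.map_cons, List.prod_cons, List.map_map]
    have h1 : (A fun i => t i + 1 - (0 + 1)) = A t := by
      have : (fun i => t i + 1 - (0 + 1)) = t := by funext i; omega
      rw [this]
    have h2 : List.map ((fun k => A fun i => t i + 1 - (k + 1)) ∘ Nat.succ)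
          (List.range (⨅ i, t i)) =
        List.map (fun k => A fun i => t i - (k + 1)) (List.range (⨅ i, t i)) := by
      apply List.map_congr_left
      intro k _
      simp only [Function.comp]
      have : (fun i => t i + 1 - (k.succ + 1)) = (fun i => t i - (k + 1)) := by
        funext i; omega
      rw [this]
    rw [h1, h2]
  have hmapmul : ∀ M N : Matrix (Fin n) (Fin n) ℝ,
      (M * N).map Complex.ofReal = M.map Complex.ofReal * N.map Complex.ofReal := by
    intro M N
    exact Matrix.map_mul (f := Complex.ofRealHom)
  have hkey : ∀ t : Fin m → ℕ,
      P (fun i => t i + 1) = (A t).map Complex.ofReal * P t * (B t)⁻¹ := by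
    intro t
    rw [hP, hP, hΦstep, hBper, hinf t, pow_succ, hmapmul]
    simp only [Matrix.mul_assoc]
  have hBdet : ∀ t : Fin m → ℕ, IsUnit (B t).det :=
    fun t => (Matrix.isUnit_iff_isUnit_det _).mp (hBinv t)
  have hAmap : ∀ t : Fin m → ℕ, IsUnit ((A t).map Complex.ofReal) := by
    intro t
    have := (hAinv t).map
      (Complex.ofRealHom.mapMatrix : Matrix (Fin n) (Fin n) ℝ →+* Matrix (Fin n) (Fin n) ℂ)
    exact this
  have hAdet : ∀ t : Fin m → ℕ, IsUnit ((A t).map Complex.ofReal).det :=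
    fun t => (Matrix.isUnit_iff_isUnit_det _).mp (hAmap t)
  have hPB : ∀ t : Fin m → ℕ,
      P (fun i => t i + 1) * B t = (A t).map Complex.ofReal * P t := by
    intro t
    rw [hkey t, Matrix.mul_assoc, Matrix.nonsing_inv_mul _ (hBdet t), Matrix.mul_one]
  constructor
  · intro y hy t
    rw [hy t, Matrix.mulVec_mulVec, Matrix.mulVec_mulVec, hPB t]
  · intro x hx t
    rw [hx t, Matrix.mulVec_mulVec, Matrix.mulVec_mulVec]
    congr 1
    rw [hkey t, Matrix.mul_inv_rev, Matrix.mul_inv_rev,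
      Matrix.nonsing_inv_nonsing_inv _ (hBdet t)]
    simp [Matrix.mul_assoc, Matrix.nonsing_inv_mul _ (hAdet t)]
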